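/- Let α > 1, H ≥ 0, and set h(x) = (√(α−1)/√(H²+1)) tanh x. Then f(x) = (1/(2(H²+1))) [1 + h(x)·arctan(h(x))] satisfies f''(x) + (2/cosh²x) f(x) = (H²+α) cosh²x / ((H²+α)cosh²x + 1−α)² for all x ∈ ℝ. -/

import Mathlib

lemma tanh_hasDerivAt (y : ℝ) :
    HasDerivAt Real.tanh (1 - Real.tanh y ^ 2) y := by
  have hc := Real.cosh_pos y
  have hd := (Real.hasDerivAt_sinh y).div (Real.hasDerivAt_cosh y) hc.ne'
  have heq : Real.tanh = fun z => Real.sinh z / Real.cosh z :=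
    funext fun z => Real.tanh_eq_sinh_div_cosh z
  rw [heq]
  convert hd using 1
  show 1 - (Real.sinh y / Real.cosh y) ^ 2 = _
  have h1 := Real.cosh_sq_sub_sinh_sq y
  field_simp
  all_goals rfl

theorem stmt9 (α H : ℝ) (hα : 1 < α) (hH : 0 ≤ H)
    (h f : ℝ → ℝ)
    (hh : ∀ x, h x = Real.sqrt (α - 1) / Real.sqrt (H ^ 2 + 1) * Real.tanh x)
    (hf : ∀ x, f x = 1 / (2 * (H ^ 2 + 1)) * (1 + h x * Real.arctan (h x)))
    (x : ℝ) :
    deriv (deriv f) x + 2 / Real.cosh x ^ 2 * f x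
      = (H ^ 2 + α) * Real.cosh x ^ 2
        / ((H ^ 2 + α) * Real.cosh x ^ 2 + 1 - α) ^ 2 := by
  set k : ℝ := Real.sqrt (α - 1) / Real.sqrt (H ^ 2 + 1) with hkdef
  set c : ℝ := 1 / (2 * (H ^ 2 + 1)) with hcdef
  have hH1 : (0:ℝ) < H ^ 2 + 1 := by positivity
  have hk2 : k ^ 2 = (α - 1) / (H ^ 2 + 1) := by
    rw [hkdef, div_pow, Real.sq_sqrt (by linarith : (0:ℝ) ≤ α - 1),
      Real.sq_sqrt hH1.le]
  have hα' : α = k ^ 2 * (H ^ 2 + 1) + 1 := by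
    rw [hk2]; field_simp; ring
  have hfe : f = fun y => c * (1 + k * Real.tanh y * Real.arctan (k * Real.tanh y)) :=
    funext fun y => by rw [hf, hh]
  -- first derivative
  set F1 : ℝ → ℝ := fun y =>
    c * ((k * (1 - Real.tanh y ^ 2)) * Real.arctan (k * Real.tanh y) +
      k * Real.tanh y * ((1 + (k * Real.tanh y) ^ 2)⁻¹ * (k * (1 - Real.tanh y ^ 2)))) with hF1
  have hDf : ∀ y, HasDerivAt f (F1 y) y := by
    intro y
    have hg : HasDerivAt (fun z => k * Real.tanh z) (k * (1 - Real.tanh y ^ 2)) y :=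
      (tanh_hasDerivAt y).const_mul k
    have ha : HasDerivAt (fun z => Real.arctan (k * Real.tanh z))
        ((1 + (k * Real.tanh y) ^ 2)⁻¹ * (k * (1 - Real.tanh y ^ 2))) y :=
      by exact (Real.hasDerivAt_arctan' (k * Real.tanh y)).comp y hg
    rw [hfe]
    exact ((hg.mul ha).const_add 1).const_mul c
  have hdf : deriv f = F1 := funext fun y => (hDf y).deriv
  -- second derivative at x
  have hg : HasDerivAt (fun z => k * Real.tanh z) (k * (1 - Real.tanh x ^ 2)) x :=
    (tanh_hasDerivAt x).const_mul k
  have hdt : HasDerivAt (fun z => 1 - Real.tanh z ^ 2)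
      (-((2:ℕ) * Real.tanh x ^ (2-1) * (1 - Real.tanh x ^ 2))) x :=
    ((tanh_hasDerivAt x).pow 2).const_sub 1
  have hkdt : HasDerivAt (fun z => k * (1 - Real.tanh z ^ 2))
      (k * -((2:ℕ) * Real.tanh x ^ (2-1) * (1 - Real.tanh x ^ 2))) x :=
    hdt.const_mul k
  have hA : HasDerivAt (fun z => Real.arctan (k * Real.tanh z))
      ((1 + (k * Real.tanh x) ^ 2)⁻¹ * (k * (1 - Real.tanh x ^ 2))) x :=
    by exact (Real.hasDerivAt_arctan' (k * Real.tanh x)).comp x hg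
  have hden : (1 + (k * Real.tanh x) ^ 2) ≠ 0 := by positivity
  have hd2 : HasDerivAt (fun z => 1 + (k * Real.tanh z) ^ 2)
      ((2:ℕ) * (k * Real.tanh x) ^ (2-1) * (k * (1 - Real.tanh x ^ 2))) x :=
    (hg.pow 2).const_add 1
  have hq : HasDerivAt (fun z => (1 + (k * Real.tanh z) ^ 2)⁻¹)
      (-((2:ℕ) * (k * Real.tanh x) ^ (2-1) * (k * (1 - Real.tanh x ^ 2))) /
        (1 + (k * Real.tanh x) ^ 2) ^ 2) x :=
    hd2.inv hden
  have hD2 : HasDerivAt F1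
      (c * ((k * -((2:ℕ) * Real.tanh x ^ (2-1) * (1 - Real.tanh x ^ 2))) *
          Real.arctan (k * Real.tanh x) +
        (k * (1 - Real.tanh x ^ 2)) *
          ((1 + (k * Real.tanh x) ^ 2)⁻¹ * (k * (1 - Real.tanh x ^ 2))) +
        ((k * (1 - Real.tanh x ^ 2)) *
            ((1 + (k * Real.tanh x) ^ 2)⁻¹ * (k * (1 - Real.tanh x ^ 2))) +
          k * Real.tanh x *
            (-((2:ℕ) * (k * Real.tanh x) ^ (2-1) * (k * (1 - Real.tanh x ^ 2))) /
                (1 + (k * Real.tanh x) ^ 2) ^ 2 * (k * (1 - Real.tanh x ^ 2)) +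
              (1 + (k * Real.tanh x) ^ 2)⁻¹ *
                (k * -((2:ℕ) * Real.tanh x ^ (2-1) * (1 - Real.tanh x ^ 2))))))) x := by
    exact (((hkdt.mul hA).add (hg.mul (hq.mul hkdt))).const_mul c)
  rw [hdf]
  rw [hD2.deriv, hf, hh]
  -- eliminate cosh in favour of tanh
  have htlt : Real.tanh x ^ 2 < 1 := by
    rw [Real.tanh_eq_sinh_div_cosh, div_pow]
    rw [div_lt_one (by positivity)]
    nlinarith [Real.cosh_sq_sub_sinh_sq x]
  have hC : Real.cosh x ^ 2 = (1 - Real.tanh x ^ 2)⁻¹ := by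
    rw [Real.tanh_eq_sinh_div_cosh, div_pow]
    have hc := Real.cosh_pos x
    have := Real.cosh_sq_sub_sinh_sq x
    field_simp
    linarith
  rw [hC, hα']
  have h1tpos : (0:ℝ) < 1 - Real.tanh x ^ 2 := by linarith
  have h1t : (1:ℝ) - Real.tanh x ^ 2 ≠ 0 := ne_of_gt h1tpos
  have hpos2 : (0:ℝ) < 1 + (k * Real.tanh x) ^ 2 := by positivity
  have hkey : (H ^ 2 + (k ^ 2 * (H ^ 2 + 1) + 1)) * (1 - Real.tanh x ^ 2)⁻¹ + 1 -
      (k ^ 2 * (H ^ 2 + 1) + 1)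
      = ((H ^ 2 + 1) * (1 + (k * Real.tanh x) ^ 2)) / (1 - Real.tanh x ^ 2) := by
    field_simp
    ring
  rw [hkey, hcdef]
  have hne3 : ((H ^ 2 + 1) * (1 + (k * Real.tanh x) ^ 2)) / (1 - Real.tanh x ^ 2) ≠ 0 :=
    ne_of_gt (div_pos (by positivity) h1tpos)
  field_simp
  ring
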